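/- Let τ > 0 and D > 0 be real numbers, and set Δx = √(3·τ·D) (so that 3·τ·D/(Δx)² = 1) and Δt = 2τ. Then for any grid function u : ℕ × ℤ → ℝ and any k ∈ ℕ, m ∈ ℤ, the nonstandard discretization of the symmetry-derived heat PDE, namely [ (u^{k+1}_{m+1} + u^{k+1}_m + u^{k+1}_{m−1})/3 − u^k_m ]/Δt = D·(u^k_{m+1} − 2u^k_m + u^k_{m−1})/(Δx)² + [τ·D/(Δt·(Δx)²)]·(u^{k+1}_{m+1} − 2u^{k+1}_m + u^{k+1}_{m−1} − u^k_{m+1} + 2u^k_m − u^k_{m−1}), holds at (k,m) if and only if the three-point random walk equation u^{k+1}_m = (1/3)·u^k_{m+1} + (1/3)·u^k_m + (1/3)·u^k_{m−1} holds at (k,m). -/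

import Mathlib

theorem stmt_9 (τ D Δt Δx : ℝ) (hτ : 0 < τ) (hD : 0 < D)
    (hΔx : Δx = Real.sqrt (3 * τ * D)) (hΔt : Δt = 2 * τ)
    (u : ℕ × ℤ → ℝ) (k : ℕ) (m : ℤ) :
    ((u (k + 1, m + 1) + u (k + 1, m) + u (k + 1, m - 1)) / 3 - u (k, m)) / Δt
      = D * (u (k, m + 1) - 2 * u (k, m) + u (k, m - 1)) / Δx ^ 2
        + (τ * D / (Δt * Δx ^ 2))
          * (u (k + 1, m + 1) - 2 * u (k + 1, m) + u (k + 1, m - 1)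
              - u (k, m + 1) + 2 * u (k, m) - u (k, m - 1))
    ↔ u (k + 1, m) = (1/3) * u (k, m + 1) + (1/3) * u (k, m) + (1/3) * u (k, m - 1) := by
  have hx2 : Δx ^ 2 = 3 * τ * D := by
    rw [hΔx, Real.sq_sqrt]; positivity
  have hτ' : τ ≠ 0 := ne_of_gt hτ
  have hD' : D ≠ 0 := ne_of_gt hD
  rw [hΔt, hx2]
  field_simp
  have hc : (18:ℝ) * τ^3 * D^2 ≠ 0 := by positivity
  constructor
  · intro h
    have h2 : 18 * τ^3 * D^2 *
        (u (k + 1, m) * 3 - (u (k, m + 1) + u (k, m) + u (k, m - 1))) = 0 := by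
      linear_combination (18 * τ^3 * D^2) * h
    rcases mul_eq_zero.mp h2 with h3 | h3
    · exact absurd h3 hc
    · linarith
  · intro h
    linear_combination h
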